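/- Let G_k be the k×k grid with k ≥ 2. If X ⊆ V(G_k) satisfies mm(X) < k, then X contains a full row if and only if X contains a full column. -/

import Mathlib

open SimpleGraph

/-- Size of a maximum matching in the bipartite graph of edges of `G` crossing `(A, Aᶜ)`. -/
noncomputable def mmVal {V : Type*} (G : SimpleGraph V) (A : Set V) : ℕ :=
  sSup {n | ∃ M : Finset (V × V),
    (∀ p ∈ M, p.1 ∈ A ∧ p.2 ∉ A ∧ G.Adj p.1 p.2) ∧
    (∀ p ∈ M, ∀ q ∈ M, p ≠ q → p.1 ≠ q.1 ∧ p.2 ≠ q.2) ∧ M.card = n}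

/-- A branch-decomposition over the vertex set of `G`: a finite subcubic tree together with a
bijection between its leaves and the vertices of `G`. -/
structure BranchDecomp {V : Type*} (G : SimpleGraph V) where
  B : Type
  finB : Finite B
  T : SimpleGraph B
  isTree : T.IsTree
  subcubic : ∀ b : B, (T.neighborSet b).ncard = 1 ∨ (T.neighborSet b).ncard = 3
  L : {b : B // (T.neighborSet b).ncard = 1} ≃ V

/-- The set of vertices of `G` whose leaves lie on the `u`-side of the tree edge `uw`. -/
noncomputable def BranchDecomp.side {V : Type*} {G : SimpleGraph V} (D : BranchDecomp G)
    (u w : D.B) : Set V :=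
  {x : V | (D.T.deleteEdges {s(u, w)}).Reachable (D.L.symm x).1 u}

/-- The width of a branch-decomposition is at most `k`. -/
def BranchDecomp.widthLE {V : Type*} {G : SimpleGraph V} (D : BranchDecomp G) (k : ℕ) : Prop :=
  ∀ u w : D.B, D.T.Adj u w → mmVal G (D.side u w) ≤ k

/-- The maximum matching width of `G`. -/
noncomputable def mmw {V : Type*} (G : SimpleGraph V) : ℕ :=
  sInf {k | ∃ D : BranchDecomp G, D.widthLE k}
/-- `H` is a minor of `G`: there is a family of nonempty, pairwise disjoint, connected branch
sets in `G` indexed by the vertices of `H`, with edges of `H` realized by edges of `G`. -/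
def IsMinor {W : Type*} {V : Type*} (H : SimpleGraph W) (G : SimpleGraph V) : Prop :=
  ∃ φ : W → Set V,
    (∀ w, (φ w).Nonempty) ∧
    (∀ w, (G.induce (φ w)).Connected) ∧
    (∀ w w', w ≠ w' → Disjoint (φ w) (φ w')) ∧
    (∀ w w', H.Adj w w' → ∃ a ∈ φ w, ∃ b ∈ φ w', G.Adj a b)

/-- The `k × k` grid graph: vertices `(i, j)`, edges between vertices at Manhattan distance 1. -/
def gridGraph (k : ℕ) : SimpleGraph (Fin k × Fin k) :=
  SimpleGraph.fromRel (fun p q =>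
    (p.1 = q.1 ∧ (p.2 : ℕ) + 1 = (q.2 : ℕ)) ∨ (p.2 = q.2 ∧ (p.1 : ℕ) + 1 = (q.1 : ℕ)))

/-- The row `R_j` of the `k × k` grid. -/
def gridRow (k : ℕ) (j : Fin k) : Set (Fin k × Fin k) := {p | p.2 = j}

/-- The column `C_i` of the `k × k` grid. -/
def gridCol (k : ℕ) (i : Fin k) : Set (Fin k × Fin k) := {p | p.1 = i}

/-- `X` is small: `mm(X) < k` and `X` contains no full row. -/
def GridSmall (k : ℕ) (X : Set (Fin k × Fin k)) : Prop :=
  mmVal (gridGraph k) X < k ∧ ∀ j : Fin k, ¬ gridRow k j ⊆ X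

/-- `G` is `k`-connected: `|V(G)| ≥ k` and deleting fewer than `k` vertices leaves `G`
connected. -/
def KConnected {V : Type*} (k : ℕ) (G : SimpleGraph V) : Prop :=
  k ≤ Nat.card V ∧ ∀ X : Set V, X.ncard < k → (G.induce Xᶜ).Connected

/-- A block of `G`: a bridge (with its two endpoints), or a maximal 2-connected induced
subgraph. -/
def IsBlock {V : Type*} (G : SimpleGraph V) (Bs : Set V) : Prop :=
  (∃ a b : V, G.Adj a b ∧ G.IsBridge s(a, b) ∧ Bs = {a, b}) ∨
  (KConnected 2 (G.induce Bs) ∧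
    ∀ B' : Set V, Bs ⊆ B' → KConnected 2 (G.induce B') → B' = Bs)

/-- A tree-representation of `G`: a finite subcubic tree `T` and nontrivial subtrees `F x`
for each vertex `x` such that adjacent vertices have intersecting subtrees. -/
structure TreeRep {V : Type*} (G : SimpleGraph V) where
  B : Type
  finB : Finite B
  T : SimpleGraph B
  isTree : T.IsTree
  subcubic : ∀ b : B, (T.neighborSet b).ncard = 1 ∨ (T.neighborSet b).ncard = 3
  F : V → Set B
  nontrivial : ∀ x : V, ∃ u w : B, u ∈ F x ∧ w ∈ F x ∧ T.Adj u w
  subtree : ∀ x : V, (T.induce (F x)).Connected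
  adjMeet : ∀ x y : V, G.Adj x y → (F x ∩ F y).Nonempty

/-- Every edge of the tree lies in at most `k` of the subtrees. -/
def TreeRep.widthLE {V : Type*} {G : SimpleGraph V} (R : TreeRep G) (k : ℕ) : Prop :=
  ∀ u w : R.B, R.T.Adj u w → {x : V | u ∈ R.F x ∧ w ∈ R.F x}.ncard ≤ k

/-- Contraction of the edge `uv` of `G` (the merged vertex is `u`). -/
def contractEdge {V : Type*} (G : SimpleGraph V) (u v : V) : SimpleGraph {x : V // x ≠ v} :=
  SimpleGraph.fromRel (fun x y =>
    G.Adj x.1 y.1 ∨ (x.1 = u ∧ G.Adj v y.1) ∨ (y.1 = u ∧ G.Adj v x.1))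


private lemma flip_aux (P : ℕ → Prop) : ∀ n, P 0 → ¬ P n → ∃ c, c + 1 ≤ n ∧ P c ∧ ¬ P (c+1) := by
  intro n
  induction n with
  | zero => intro h hn; exact absurd h hn
  | succ m ih =>
    intro h0 hn
    by_cases hm : P m
    · exact ⟨m, le_refl _, hm, hn⟩
    · obtain ⟨c, hc, h1, h2⟩ := ih h0 hm
      exact ⟨c, hc.trans (Nat.le_succ m), h1, h2⟩

private lemma flip_lem (P : ℕ → Prop) (a b : ℕ) (ha : P a) (hb : ¬ P b) :
    ∃ c, c + 1 ≤ max a b ∧ ((P c ∧ ¬ P (c+1)) ∨ (¬ P c ∧ P (c+1))) := by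
  rcases lt_or_ge a b with hab | hab
  · obtain ⟨c, hc, h1, h2⟩ := flip_aux (fun t => P (a + t)) (b - a)
      (by simpa using ha) (by show ¬ P (a + (b - a)); rwa [Nat.add_sub_cancel' hab.le])
    refine ⟨a + c, ?_, Or.inl ⟨h1, by simpa [Nat.add_assoc] using h2⟩⟩
    have : a + (c + 1) ≤ a + (b - a) := Nat.add_le_add_left hc a
    rw [Nat.add_sub_cancel' hab.le] at this
    omega
  · have hba : b < a := lt_of_le_of_ne hab (by rintro rfl; exact hb ha)
    obtain ⟨c, hc, h1, h2⟩ := flip_aux (fun t => ¬ P (b + t)) (a - b)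
      (by simpa using hb) (by show ¬¬ P (b + (a - b)); rw [Nat.add_sub_cancel' hba.le]; exact not_not_intro ha)
    refine ⟨b + c, ?_, Or.inr ⟨h1, not_not.mp (by simpa [Nat.add_assoc] using h2)⟩⟩
    have : b + (c + 1) ≤ b + (a - b) := Nat.add_le_add_left hc b
    rw [Nat.add_sub_cancel' hba.le] at this
    omega

private lemma mmVal_ge {V : Type*} (G : SimpleGraph V) [Fintype V] (A : Set V) (n : ℕ)
    (M : Finset (V × V))
    (h1 : ∀ p ∈ M, p.1 ∈ A ∧ p.2 ∉ A ∧ G.Adj p.1 p.2)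
    (h2 : ∀ p ∈ M, ∀ q ∈ M, p ≠ q → p.1 ≠ q.1 ∧ p.2 ≠ q.2)
    (h3 : M.card = n) : n ≤ mmVal G A := by
  classical
  apply le_csSup
  · refine ⟨Fintype.card (V × V), ?_⟩
    rintro m ⟨M', -, -, rfl⟩
    exact Finset.card_le_univ M'
  · exact ⟨M, h1, h2, h3⟩

private lemma grid_adj_of (k : ℕ) (p q : Fin k × Fin k)
    (h : (p.1 = q.1 ∧ (p.2 : ℕ) + 1 = (q.2 : ℕ)) ∨ (p.2 = q.2 ∧ (p.1 : ℕ) + 1 = (q.1 : ℕ))) :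
    (gridGraph k).Adj p q := by
  rw [gridGraph, SimpleGraph.fromRel_adj]
  refine ⟨?_, Or.inl h⟩
  rintro rfl
  rcases h with ⟨-, h⟩ | ⟨-, h⟩ <;> omega

open Fin.NatCast in
private lemma key_row (k : ℕ) (X : Set (Fin k × Fin k)) (j : Fin k) (hrow : gridRow k j ⊆ X)
    (hcol : ∀ i : Fin k, ¬ gridCol k i ⊆ X) : k ≤ mmVal (gridGraph k) X := by
  classical
  haveI : NeZero k := ⟨Fin.pos j |>.ne'⟩
  have hedge : ∀ i : Fin k, ∃ p : (Fin k × Fin k) × (Fin k × Fin k),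
      p.1.1 = i ∧ p.2.1 = i ∧ p.1 ∈ X ∧ p.2 ∉ X ∧ (gridGraph k).Adj p.1 p.2 := by
    intro i
    obtain ⟨q, hq1, hq2⟩ := Set.not_subset.mp (hcol i)
    have hqi : q.1 = i := hq1
    have hin : ((i, j) : Fin k × Fin k) ∈ X := hrow rfl
    have hnotin : ((i, q.2) : Fin k × Fin k) ∉ X := by
      rwa [show ((i, q.2) : Fin k × Fin k) = q from by rw [← hqi]] 
    obtain ⟨c, hc, hcase⟩ := flip_lem (fun t => ((i, (t : Fin k)) : Fin k × Fin k) ∈ X)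
      (j : ℕ) (q.2 : ℕ) (by simpa using hin) (by simpa using hnotin)
    have hck : c + 1 < k := lt_of_le_of_lt hc (by
      rcases max_cases (j : ℕ) (q.2 : ℕ) with ⟨h, -⟩ | ⟨h, -⟩ <;> rw [h]
      · exact j.isLt
      · exact q.2.isLt)
    have hv1 : ((c : Fin k) : ℕ) = c := Fin.val_cast_of_lt (by omega)
    have hv2 : (((c+1 : ℕ) : Fin k) : ℕ) = c + 1 := Fin.val_cast_of_lt hck
    rcases hcase with ⟨h1, h2⟩ | ⟨h1, h2⟩
    · exact ⟨((i, (c : Fin k)), (i, ((c+1 : ℕ) : Fin k))), rfl, rfl, h1, h2,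
        grid_adj_of k _ _ (Or.inl ⟨rfl, by rw [hv1, hv2]⟩)⟩
    · refine ⟨((i, ((c+1 : ℕ) : Fin k)), (i, (c : Fin k))), rfl, rfl, h2, h1, ?_⟩
      exact (grid_adj_of k (i, (c : Fin k)) (i, ((c+1 : ℕ) : Fin k))
        (Or.inl ⟨rfl, by rw [hv1, hv2]⟩)).symm
  choose e he1 he2 he3 he4 he5 using hedge
  have einj : Function.Injective e := by
    intro i i' h
    rw [← he1 i, ← he1 i', h]
  refine mmVal_ge _ _ _ (Finset.image e Finset.univ) ?_ ?_ ?_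
  · intro p hp
    obtain ⟨i, -, rfl⟩ := Finset.mem_image.mp hp
    exact ⟨he3 i, he4 i, he5 i⟩
  · intro p hp q hq hpq
    obtain ⟨i, -, rfl⟩ := Finset.mem_image.mp hp
    obtain ⟨i', -, rfl⟩ := Finset.mem_image.mp hq
    have : i ≠ i' := fun h => hpq (by rw [h])
    constructor
    · intro h; exact this (by rw [← he1 i, ← he1 i', h])
    · intro h; exact this (by rw [← he2 i, ← he2 i', h])
  · rw [Finset.card_image_of_injective _ einj, Finset.card_univ, Fintype.card_fin]

open Fin.NatCast in
private lemma key_col (k : ℕ) (X : Set (Fin k × Fin k)) (i : Fin k) (hcol : gridCol k i ⊆ X)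
    (hrow : ∀ j : Fin k, ¬ gridRow k j ⊆ X) : k ≤ mmVal (gridGraph k) X := by
  classical
  haveI : NeZero k := ⟨Fin.pos i |>.ne'⟩
  have hedge : ∀ j : Fin k, ∃ p : (Fin k × Fin k) × (Fin k × Fin k),
      p.1.2 = j ∧ p.2.2 = j ∧ p.1 ∈ X ∧ p.2 ∉ X ∧ (gridGraph k).Adj p.1 p.2 := by
    intro j
    obtain ⟨q, hq1, hq2⟩ := Set.not_subset.mp (hrow j)
    have hqj : q.2 = j := hq1
    have hin : ((i, j) : Fin k × Fin k) ∈ X := hcol rfl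
    have hnotin : ((q.1, j) : Fin k × Fin k) ∉ X := by
      rwa [show ((q.1, j) : Fin k × Fin k) = q from by rw [← hqj]] 
    obtain ⟨c, hc, hcase⟩ := flip_lem (fun t => (((t : Fin k), j) : Fin k × Fin k) ∈ X)
      (i : ℕ) (q.1 : ℕ) (by simpa using hin) (by simpa using hnotin)
    have hck : c + 1 < k := lt_of_le_of_lt hc (by
      rcases max_cases (i : ℕ) (q.1 : ℕ) with ⟨h, -⟩ | ⟨h, -⟩ <;> rw [h]
      · exact i.isLt
      · exact q.1.isLt)
    have hv1 : ((c : Fin k) : ℕ) = c := Fin.val_cast_of_lt (by omega)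
    have hv2 : (((c+1 : ℕ) : Fin k) : ℕ) = c + 1 := Fin.val_cast_of_lt hck
    rcases hcase with ⟨h1, h2⟩ | ⟨h1, h2⟩
    · exact ⟨(((c : Fin k), j), (((c+1 : ℕ) : Fin k), j)), rfl, rfl, h1, h2,
        grid_adj_of k _ _ (Or.inr ⟨rfl, by rw [hv1, hv2]⟩)⟩
    · refine ⟨((((c+1 : ℕ) : Fin k), j), ((c : Fin k), j)), rfl, rfl, h2, h1, ?_⟩
      exact (grid_adj_of k ((c : Fin k), j) (((c+1 : ℕ) : Fin k), j)
        (Or.inr ⟨rfl, by rw [hv1, hv2]⟩)).symm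
  choose e he1 he2 he3 he4 he5 using hedge
  have einj : Function.Injective e := by
    intro j j' h
    rw [← he1 j, ← he1 j', h]
  refine mmVal_ge _ _ _ (Finset.image e Finset.univ) ?_ ?_ ?_
  · intro p hp
    obtain ⟨j, -, rfl⟩ := Finset.mem_image.mp hp
    exact ⟨he3 j, he4 j, he5 j⟩
  · intro p hp q hq hpq
    obtain ⟨j, -, rfl⟩ := Finset.mem_image.mp hp
    obtain ⟨j', -, rfl⟩ := Finset.mem_image.mp hq
    have : j ≠ j' := fun h => hpq (by rw [h])
    constructor
    · intro h; exact this (by rw [← he1 j, ← he1 j', congrArg Prod.snd h])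
    · intro h; exact this (by rw [← he2 j, ← he2 j', congrArg Prod.snd h])
  · rw [Finset.card_image_of_injective _ einj, Finset.card_univ, Fintype.card_fin]

/-- if `mm(X) < k` then `X` contains a full row iff it contains a full column. -/
theorem grid_row_iff_col (k : ℕ) (hk : 2 ≤ k) (X : Set (Fin k × Fin k))
    (hX : mmVal (gridGraph k) X < k) :
    (∃ j : Fin k, gridRow k j ⊆ X) ↔ (∃ i : Fin k, gridCol k i ⊆ X) := by
  constructor
  · rintro ⟨j, hj⟩
    by_contra h
    push_neg at h
    have := key_row k X j hj (fun i hi => h i hi)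
    omega
  · rintro ⟨i, hi⟩
    by_contra h
    push_neg at h
    have := key_col k X i hi (fun j hj => h j hj)
    omega
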